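/- Let k be a field, S = k[t], and R a core of S. Then the contraction map Spec S → Spec R, Q ↦ Q ∩ R, is a bijection. -/

import Mathlib

open Polynomial

section Aux

variable {k : Type*} [Field k] (R : Subalgebra k (Polynomial k))
  (c₀ : ℕ) (hc₀ : 0 < c₀) (hR : ∀ s : Polynomial k, (X : Polynomial k) ^ c₀ * s ∈ R)

include hc₀ hR in
theorem core_span_top :
    Submodule.span R (Set.range fun i : Fin c₀ => (X : Polynomial k) ^ (i : ℕ)) = ⊤ := by
  rw [eq_top_iff]
  intro p _
  have hmod : p %ₘ (X ^ c₀) + X ^ c₀ * (p /ₘ (X ^ c₀)) = p :=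
    p.modByMonic_add_div (X ^ c₀)
  rw [← hmod]
  apply Submodule.add_mem
  · -- low degree part
    have hdeg : (p %ₘ (X ^ c₀)).natDegree < c₀ := by
      by_cases h0 : p %ₘ (X ^ c₀) = 0
      · simpa [h0] using hc₀
      · have := degree_modByMonic_lt p (monic_X_pow (R := k) c₀)
        rw [degree_X_pow] at this
        exact (natDegree_lt_iff_degree_lt h0).2 this
    rw [(p %ₘ (X ^ c₀)).as_sum_range' c₀ hdeg]
    apply Submodule.sum_mem
    intro i hi
    rw [← C_mul_X_pow_eq_monomial]
    have : (C ((p %ₘ (X ^ c₀)).coeff i) : Polynomial k) * X ^ i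
        = (algebraMap k R ((p %ₘ (X ^ c₀)).coeff i)) • (X ^ i : Polynomial k) := by
      rw [Algebra.smul_def]
      congr 1
    rw [this]
    refine Submodule.smul_mem _ _ (Submodule.subset_span ?_)
    exact ⟨⟨i, Finset.mem_range.mp hi⟩, rfl⟩
  · -- the part in R
    have : (X : Polynomial k) ^ c₀ * (p /ₘ (X ^ c₀))
        = (⟨X ^ c₀ * (p /ₘ (X ^ c₀)), hR _⟩ : R) • ((X : Polynomial k) ^ ((⟨0, hc₀⟩ : Fin c₀) : ℕ)) := by
      simp [Algebra.smul_def, Subalgebra.algebraMap_eq]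
    rw [this]
    exact Submodule.smul_mem _ _ (Submodule.subset_span ⟨⟨0, hc₀⟩, rfl⟩)

include hR in
theorem core_mem_iff (Q : Ideal (Polynomial k)) (hQ : Q.IsPrime)
    (hX : (X : Polynomial k) ∉ Q) (s : Polynomial k) :
    s ∈ Q ↔ (⟨X ^ c₀ * s, hR s⟩ : R) ∈ Q.comap (algebraMap R (Polynomial k)) := by
  rw [Ideal.mem_comap]
  constructor
  · intro hs
    exact Q.mul_mem_left _ hs
  · intro hs
    rcases hQ.mem_or_mem hs with h | h
    · exact absurd (hQ.mem_of_pow_mem _ h) hX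
    · exact h

end Aux

/-- if `R` is a core of `S = k[t]`, the contraction map
`Spec S → Spec R`, `Q ↦ Q ∩ R`, is bijective. -/
theorem core_comap_spec_bijective
    (k : Type*) [Field k] (R : Subalgebra k (Polynomial k))
    (c₀ : ℕ) (hc₀ : 0 < c₀) (hR : ∀ s : Polynomial k, (X : Polynomial k) ^ c₀ * s ∈ R) :
    Function.Bijective
      (PrimeSpectrum.comap (algebraMap R (Polynomial k)) :
        PrimeSpectrum (Polynomial k) → PrimeSpectrum R) := by
  have hfin : Module.Finite R (Polynomial k) := by
    exact ⟨Submodule.fg_def.mpr ⟨_, Set.finite_range _, core_span_top R c₀ hc₀ hR⟩⟩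
  have hint : Algebra.IsIntegral R (Polynomial k) := Algebra.IsIntegral.of_finite _ _
  constructor
  · -- injectivity
    intro Q₁ Q₂ h
    have hcomap : Q₁.asIdeal.comap (algebraMap R (Polynomial k))
        = Q₂.asIdeal.comap (algebraMap R (Polynomial k)) := congrArg PrimeSpectrum.asIdeal h
    -- X ∈ Q₁ ↔ X ∈ Q₂
    have hXiff : (X : Polynomial k) ∈ Q₁.asIdeal ↔ (X : Polynomial k) ∈ Q₂.asIdeal := by
      have key : ∀ Q : PrimeSpectrum (Polynomial k),
          (X : Polynomial k) ∈ Q.asIdeal ↔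
          (⟨X ^ c₀ * X, hR X⟩ : R) ∈ Q.asIdeal.comap (algebraMap R (Polynomial k)) := by
        intro Q
        rw [Ideal.mem_comap]
        constructor
        · intro hx; exact Q.asIdeal.mul_mem_left _ hx
        · intro hx
          have : (X : Polynomial k) ^ (c₀ + 1) ∈ Q.asIdeal := by
            rw [pow_succ]; exact hx
          exact Q.isPrime.mem_of_pow_mem _ this
      rw [key Q₁, key Q₂, hcomap]
    by_cases hX : (X : Polynomial k) ∈ Q₁.asIdeal
    · -- both equal (X)
      have hX2 : (X : Polynomial k) ∈ Q₂.asIdeal := hXiff.mp hX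
      have hmax : (Ideal.span {(X : Polynomial k)}).IsMaximal :=
        PrincipalIdealRing.isMaximal_of_irreducible irreducible_X
      have h1 : Q₁.asIdeal = Ideal.span {(X : Polynomial k)} :=
        ((hmax.eq_of_le Q₁.isPrime.ne_top (Ideal.span_le.mpr (by simpa using hX)))).symm
      have h2 : Q₂.asIdeal = Ideal.span {(X : Polynomial k)} :=
        ((hmax.eq_of_le Q₂.isPrime.ne_top (Ideal.span_le.mpr (by simpa using hX2)))).symm
      exact PrimeSpectrum.ext (h1.trans h2.symm)
    · have hX2 : (X : Polynomial k) ∉ Q₂.asIdeal := fun h' => hX (hXiff.mpr h')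
      refine PrimeSpectrum.ext (Ideal.ext fun s => ?_)
      rw [core_mem_iff R c₀ hR Q₁.asIdeal Q₁.isPrime hX s,
        core_mem_iff R c₀ hR Q₂.asIdeal Q₂.isPrime hX2 s, hcomap]
  · -- surjectivity
    intro P
    have hker : (⊥ : Ideal (Polynomial k)).comap (algebraMap R (Polynomial k)) ≤ P.asIdeal := by
      intro x hx
      have : algebraMap R (Polynomial k) x = 0 := hx
      have hx0 : x = 0 := Subtype.ext (by simpa [Subalgebra.algebraMap_eq] using this)
      rw [hx0]; exact (P.asIdeal).zero_mem
    obtain ⟨Q, -, hQprime, hQ⟩ :=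
      Ideal.exists_ideal_over_prime_of_isIntegral P.asIdeal ⊥ hker
    exact ⟨⟨Q, hQprime⟩, PrimeSpectrum.ext hQ⟩
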